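/- For all n ≥ 0, a(n) = ∑_{k=0}^{n-1} k! · C(n,k), where C(n,k) is the binomial coefficient (for n = 0 the empty sum is 0). -/

import Mathlib

def a : ℕ → ℕ
  | 0 => 0
  | n + 1 => (n + 1) * a n + 1

theorem a_eq_binomial_sum : ∀ n : ℕ,
    a n = ∑ k ∈ Finset.range n, (Nat.factorial k) * Nat.choose n k := by
  have key : ∀ n, a n = ∑ k ∈ Finset.range n, Nat.descFactorial n k := by
    intro n
    induction n with
    | zero => simp [a]
    | succ m ih =>
      rw [Finset.sum_range_succ', a, ih, Finset.mul_sum]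
      rw [Finset.sum_congr rfl fun k _ => Nat.succ_descFactorial_succ m k]
      simp [Nat.mul_add, Nat.add_comm]
  intro n
  rw [key n]
  exact Finset.sum_congr rfl fun k _ => Nat.descFactorial_eq_factorial_mul_choose n k
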